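/- Let K be a field of characteristic zero, m, n ≥ 1, φ = (φ_1,…,φ_n) ∈ K[[t_1,…,t_m]]^n, and let M : {1,…,n} × ℤ_{≥0}^m → ℤ_{≥0} be finitely supported. Set E_M(φ) = ∏_{i,J} (Θ(J)φ_i)^{M_{i,J}} ∈ K[[t_1,…,t_m]]. Then trop(E_M(φ)) = ⊙_{i,J} Val_J(Supp(φ_i))^{⊙ M_{i,J}} = Vert(Σ_{i,J} M_{i,J}·Θ_trop(J)(Supp(φ_i))), where the sum is iterated Minkowski sum and k·X denotes the k-fold Minkowski sum of X with itself (0·X = {(0,…,0)}). -/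

import Mathlib

open Pointwise

noncomputable section

/-- The embedding of `ℤ_{≥0}^m` into `ℝ^m`. -/
def emb {m : ℕ} (x : Fin m →₀ ℕ) : Fin m → ℝ := fun i => (x i : ℝ)

/-- The Newton polygon of `X ⊆ ℤ_{≥0}^m`: the convex hull (in `ℝ^m`) of
`X + ℤ_{≥0}^m`. -/
def newton {m : ℕ} (X : Set (Fin m →₀ ℕ)) : Set (Fin m → ℝ) :=
  convexHull ℝ (emb '' (X + (Set.univ : Set (Fin m →₀ ℕ))))

/-- The vertex set of `X`: the elements `x ∈ X` with `x ∉ N(X \ {x})`. -/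
def vert {m : ℕ} (X : Set (Fin m →₀ ℕ)) : Set (Fin m →₀ ℕ) :=
  {x ∈ X | emb x ∉ newton (X \ {x})}

variable {K : Type} [Field K]

/-- The support of a multivariate formal power series. -/
def supp {m : ℕ} (φ : MvPowerSeries (Fin m) K) : Set (Fin m →₀ ℕ) :=
  {L | MvPowerSeries.coeff L φ ≠ 0}

/-- The tropicalization of a multivariate formal power series: the vertex set of
its support. -/
def trop {m : ℕ} (φ : MvPowerSeries (Fin m) K) : Set (Fin m →₀ ℕ) :=
  vert (supp φ)

/-- The iterated formal partial derivative `Θ(J)φ`, defined by its coefficients: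
the coefficient of `t^L` in `Θ(J)φ` is `((L+J)!/L!) · a_{L+J}`. -/
def theta {m : ℕ} (J : Fin m →₀ ℕ) (φ : MvPowerSeries (Fin m) K) :
    MvPowerSeries (Fin m) K :=
  fun L => ((∏ i : Fin m, ((L i + J i).factorial / (L i).factorial) : ℕ) : K) *
    MvPowerSeries.coeff (L + J) φ

/-- The tropical derivative operator. -/
def thetaTrop {m : ℕ} (J : Fin m →₀ ℕ) (T : Set (Fin m →₀ ℕ)) : Set (Fin m →₀ ℕ) :=
  {L | L + J ∈ T}

/-- `Val_J(S) = Vert(Θ_trop(J) S)`. -/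
def valJ {m : ℕ} (J : Fin m →₀ ℕ) (S : Set (Fin m →₀ ℕ)) : Set (Fin m →₀ ℕ) :=
  vert (thetaTrop J S)

/-- Tropical product of supports (via Minkowski sum). -/
def odot {m : ℕ} (S T : Set (Fin m →₀ ℕ)) : Set (Fin m →₀ ℕ) := vert (S + T)

/-- `k`-fold Minkowski sum `kX = X + ⋯ + X`, with `0X = {(0,…,0)}`. -/
def nMink {m : ℕ} : ℕ → Set (Fin m →₀ ℕ) → Set (Fin m →₀ ℕ)
  | 0, _ => {0}
  | k + 1, X => X + nMink k X

/-- `k`-fold tropical power `S^{⊙k}`, with `S^{⊙0} = {(0,…,0)}`. -/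
def odotPow {m : ℕ} : ℕ → Set (Fin m →₀ ℕ) → Set (Fin m →₀ ℕ)
  | 0, _ => {0}
  | k + 1, S => odot S (odotPow k S)

namespace TropAux

variable {m : ℕ}

lemma emb_add (a b : Fin m →₀ ℕ) : emb (a + b) = emb a + emb b := by
  funext i; simp [emb]

lemma emb_zero : emb (0 : Fin m →₀ ℕ) = 0 := by funext i; simp [emb]

lemma emb_inj : Function.Injective (emb (m := m)) := by
  intro a b h
  ext i
  have h2 := congrFun h i
  simp only [emb] at h2
  exact_mod_cast h2

def dotL (w : Fin m → ℝ) : (Fin m → ℝ) →ₗ[ℝ] ℝ :=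
  ∑ i, w i • LinearMap.proj i

lemma dotL_apply (w x : Fin m → ℝ) : dotL w x = ∑ i, w i * x i := by
  simp [dotL]

lemma dotL_emb_nonneg {w : Fin m → ℝ} (hw : ∀ i, 0 ≤ w i) (a : Fin m →₀ ℕ) :
    0 ≤ dotL w (emb a) := by
  rw [dotL_apply]
  exact Finset.sum_nonneg fun i _ => mul_nonneg (hw i) (by simp [emb])

lemma dotL_emb_pos {w : Fin m → ℝ} (hw : ∀ i, 0 < w i) {a : Fin m →₀ ℕ} (ha : a ≠ 0) :
    0 < dotL w (emb a) := by
  rw [dotL_apply]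
  obtain ⟨i, hi⟩ := Finsupp.ne_iff.mp ha
  refine Finset.sum_pos' (fun j _ => mul_nonneg (hw j).le (by simp [emb])) ⟨i, Finset.mem_univ i, ?_⟩
  have h3 : a i ≠ 0 := by simpa using hi
  have : (0:ℝ) < emb a i := by
    simp only [emb]
    exact_mod_cast Nat.pos_of_ne_zero h3
  exact mul_pos (hw i) this

lemma newton_gt {w : Fin m → ℝ} (hw : ∀ i, 0 ≤ w i) {A : Set (Fin m →₀ ℕ)} {c : ℝ}
    (hA : ∀ a ∈ A, c < dotL w (emb a)) : ∀ x ∈ newton A, c < dotL w x := by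
  intro x hx
  have hconv : Convex ℝ {y : Fin m → ℝ | c < dotL w y} :=
    convex_halfSpace_gt ⟨fun a b => (dotL w).map_add a b, fun r a => (dotL w).map_smul r a⟩ c
  have hsub : emb '' (A + Set.univ) ⊆ {y | c < dotL w y} := by
    rintro _ ⟨p, hp, rfl⟩
    rcases Set.mem_add.mp hp with ⟨a, ha, k, -, rfl⟩
    rw [emb_add]
    have h1 := hA a ha
    have h2 : 0 ≤ dotL w (emb k) := dotL_emb_nonneg hw k
    show c < dotL w (emb a + emb k)
    rw [map_add]
    linarith
  exact convexHull_min hsub hconv hx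

lemma vert_of_strictmin {w : Fin m → ℝ} (hw : ∀ i, 0 < w i) {A : Set (Fin m →₀ ℕ)}
    {v : Fin m →₀ ℕ} (hv : v ∈ A)
    (hmin : ∀ y ∈ A, y ≠ v → dotL w (emb v) < dotL w (emb y)) : v ∈ vert A := by
  refine ⟨hv, fun hcon => ?_⟩
  have := newton_gt (A := A \ {v}) (c := dotL w (emb v)) (fun i => (hw i).le)
    (fun a ha => hmin a ha.1 ha.2) _ hcon
  exact lt_irrefl _ this

lemma vert_subset {A : Set (Fin m →₀ ℕ)} : vert A ⊆ A := fun _ h => h.1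

def orth (m : ℕ) : Set (Fin m → ℝ) := {x | ∀ i, 0 ≤ x i}

lemma orth_convex : Convex ℝ (orth m) := by
  intro x hx y hy a b ha hb _
  intro i
  have := hx i; have := hy i
  simp only [Pi.add_apply, Pi.smul_apply, smul_eq_mul]
  positivity

lemma orth_closed : IsClosed (orth m) := by
  have : orth m = ⋂ i, {x : Fin m → ℝ | 0 ≤ x i} := by
    ext x; simp [orth, Set.mem_iInter]
  rw [this]
  exact isClosed_iInter fun i => isClosed_le continuous_const (continuous_apply i)

lemma hull_univ_subset :
    convexHull ℝ (emb '' (Set.univ : Set (Fin m →₀ ℕ))) ⊆ orth m := by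
  apply convexHull_min _ orth_convex
  rintro _ ⟨a, -, rfl⟩ i
  simp [emb]

lemma orth_subset_hull :
    orth m ⊆ convexHull ℝ (emb '' (Set.univ : Set (Fin m →₀ ℕ))) := by
  intro x hx
  set s : ℝ := ∑ i, x i with hs
  have hs0 : 0 ≤ s := Finset.sum_nonneg fun i _ => hx i
  set N : ℕ := ⌈s⌉₊ + 1 with hN
  have hNpos : (0:ℝ) < N := by exact_mod_cast Nat.succ_pos _
  have hsN : s ≤ N := by
    calc s ≤ ⌈s⌉₊ := Nat.le_ceil s
    _ ≤ N := by exact_mod_cast Nat.le_succ _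
  set wt : Option (Fin m) → ℝ := fun o => o.elim (1 - s / N) (fun i => x i / N) with hwt
  set z : Option (Fin m) → (Fin m → ℝ) :=
    fun o => o.elim 0 (fun i => emb (Finsupp.single i N)) with hz
  have hw0 : ∀ o ∈ (Finset.univ : Finset (Option (Fin m))), 0 ≤ wt o := by
    rintro (_|i) -
    · simp only [hwt, Option.elim]
      have : s / N ≤ 1 := by
        rw [div_le_one hNpos]; exact hsN
      linarith
    · simp only [hwt, Option.elim]
      exact div_nonneg (hx i) hNpos.le
  have hwsum : ∑ o : Option (Fin m), wt o = 1 := by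
    rw [Fintype.sum_option]
    simp only [hwt, Option.elim]
    rw [← Finset.sum_div]
    field_simp
    linarith
  have hzmem : ∀ o ∈ (Finset.univ : Finset (Option (Fin m))), z o ∈
      emb '' (Set.univ : Set (Fin m →₀ ℕ)) := by
    rintro (_|i) -
    · exact ⟨0, trivial, emb_zero⟩
    · exact ⟨Finsupp.single i N, trivial, rfl⟩
  have hmem := Finset.centerMass_mem_convexHull Finset.univ hw0
    (by rw [hwsum]; norm_num) hzmem
  rw [Finset.centerMass_eq_of_sum_1 _ _ hwsum] at hmem
  convert hmem using 1
  rw [Fintype.sum_option]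
  simp only [hwt, hz, Option.elim, smul_zero, zero_add]
  funext j
  rw [Finset.sum_apply]
  have key : ∀ i ∈ (Finset.univ : Finset (Fin m)),
      ((x i / ↑N) • emb (Finsupp.single i (N:ℕ))) j = (if i = j then x j else 0) := by
    intro i _
    simp only [Pi.smul_apply, emb, Finsupp.single_apply, smul_eq_mul]
    by_cases h : i = j
    · subst h
      simp [div_mul_cancel₀ _ hNpos.ne']
    · simp [h]
  rw [Finset.sum_congr rfl key]
  simp

lemma exists_basis (A : Set (Fin m →₀ ℕ)) :
    ∃ B : Finset (Fin m →₀ ℕ), ↑B ⊆ A ∧ ∀ a ∈ A, ∃ b ∈ B, b ≤ a := by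
  classical
  set Mn : Set (Fin m →₀ ℕ) := {a ∈ A | ∀ b ∈ A, b ≤ a → b = a} with hMn
  have hanti : IsAntichain (· ≤ ·) Mn := by
    intro a ha b hb hne hle
    exact hne (hb.2 a ha.1 hle)
  have hfin : Mn.Finite := hanti.finite_of_partiallyWellOrderedOn (Set.isPWO_of_wellQuasiOrderedLE Mn)
  refine ⟨hfin.toFinset, ?_, ?_⟩
  · intro b hb
    rw [Set.Finite.coe_toFinset] at hb
    exact hb.1
  intro a ha
  have hwf : ({b ∈ A | b ≤ a}).IsWF := (Set.isPWO_of_wellQuasiOrderedLE _).isWF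
  have hne : ({b ∈ A | b ≤ a}).Nonempty := ⟨a, ha, le_refl a⟩
  refine ⟨hwf.min hne, ?_, (hwf.min_mem hne).2⟩
  rw [Set.Finite.mem_toFinset]
  refine ⟨(hwf.min_mem hne).1, fun c hc hcb => ?_⟩
  by_contra hne2
  exact hwf.not_lt_min hne ⟨hc, hcb.trans (hwf.min_mem hne).2⟩ (lt_of_le_of_ne hcb hne2)

lemma image_add (X Y : Set (Fin m →₀ ℕ)) : emb '' (X + Y) = emb '' X + emb '' Y := by
  ext p
  constructor
  · rintro ⟨q, hq, rfl⟩
    rcases Set.mem_add.mp hq with ⟨a, ha, b, hb, rfl⟩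
    rw [emb_add]
    exact Set.add_mem_add ⟨a, ha, rfl⟩ ⟨b, hb, rfl⟩
  · rintro hp
    rcases Set.mem_add.mp hp with ⟨x, ⟨a, ha, rfl⟩, y, ⟨b, hb, rfl⟩, rfl⟩
    exact ⟨a + b, Set.add_mem_add ha hb, emb_add a b⟩

lemma newton_eq {A : Set (Fin m →₀ ℕ)} {B : Finset (Fin m →₀ ℕ)} (hBA : ↑B ⊆ A)
    (hcov : ∀ a ∈ A, ∃ b ∈ B, b ≤ a) :
    newton A = convexHull ℝ (emb '' ↑B) + orth m := by
  apply Set.Subset.antisymm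
  · apply convexHull_min _ ((convex_convexHull ℝ _).add orth_convex)
    rintro _ ⟨p, hp, rfl⟩
    rcases Set.mem_add.mp hp with ⟨a, ha, k, -, rfl⟩
    obtain ⟨b, hb, hba⟩ := hcov a ha
    obtain ⟨c, rfl⟩ := le_iff_exists_add.mp hba
    rw [add_assoc, emb_add]
    exact Set.add_mem_add (subset_convexHull ℝ _ ⟨b, hb, rfl⟩)
      (hull_univ_subset (subset_convexHull ℝ _ ⟨c + k, trivial, rfl⟩))
  · have h1 : orth m = convexHull ℝ (emb '' (Set.univ : Set (Fin m →₀ ℕ))) :=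
      le_antisymm orth_subset_hull hull_univ_subset
    rw [h1, ← convexHull_add, ← image_add]
    apply convexHull_mono
    apply Set.image_mono
    exact Set.add_subset_add hBA (Set.Subset.refl _)

lemma clm_repr (f : (Fin m → ℝ) →L[ℝ] ℝ) (x : Fin m → ℝ) :
    f x = ∑ i, x i * f (Pi.single i 1) := by
  have hx : x = ∑ i, Pi.single i (x i) := (Finset.univ_sum_single x).symm
  conv_lhs => rw [hx]
  rw [map_sum]
  refine Finset.sum_congr rfl fun i _ => ?_
  have h2 : Pi.single i (x i) = x i • (Pi.single i 1 : Fin m → ℝ) := by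
    funext j
    by_cases h : j = i
    · subst h; simp [Pi.single_apply]
    · simp [Pi.single_apply, h]
  rw [h2, map_smul, smul_eq_mul]

lemma strictmin_of_vert {A : Set (Fin m →₀ ℕ)} {v : Fin m →₀ ℕ} (hv : v ∈ vert A) :
    ∃ w : Fin m → ℝ, (∀ i, 0 < w i) ∧ ∀ y ∈ A, y ≠ v → dotL w (emb v) < dotL w (emb y) := by
  classical
  by_cases hA : A \ {v} = ∅
  · refine ⟨fun _ => 1, fun _ => one_pos, fun y hy hne => ?_⟩
    exact absurd (Set.eq_empty_iff_forall_notMem.mp hA y ⟨hy, hne⟩) not_false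
  obtain ⟨B, hBA, hcov⟩ := exists_basis (A \ {v})
  have hBne : B.Nonempty := by
    obtain ⟨a, ha⟩ := Set.nonempty_iff_ne_empty.mpr hA
    obtain ⟨b, hb, -⟩ := hcov a ha
    exact ⟨b, hb⟩
  set C : Set (Fin m → ℝ) := convexHull ℝ (emb '' ↑B) + orth m with hCdef
  have hnewt : newton (A \ {v}) = C := newton_eq hBA hcov
  have hC : IsClosed C :=
    IsClosed.add_left_of_isCompact orth_closed ((B.finite_toSet.image emb).isCompact_convexHull ℝ)
  have hvC : emb v ∉ C := by rw [← hnewt]; exact hv.2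
  have hconv : Convex ℝ C := (convex_convexHull ℝ _).add orth_convex
  obtain ⟨f, u, hfv, hfC⟩ := geometric_hahn_banach_point_closed hconv hC hvC
  set w0 : Fin m → ℝ := fun i => f (Pi.single i 1) with hw0
  obtain ⟨b0, hb0⟩ := hBne
  have hb0hull : emb b0 ∈ convexHull ℝ (emb '' (↑B : Set (Fin m →₀ ℕ))) :=
    subset_convexHull ℝ _ ⟨b0, hb0, rfl⟩
  have hb0C : emb b0 ∈ C := by
    have := Set.add_mem_add hb0hull (show (0 : Fin m → ℝ) ∈ orth m from fun j => le_rfl)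
    simpa using this
  have hfb0 : u < f (emb b0) := hfC _ hb0C
  have hw0nn : ∀ i, 0 ≤ w0 i := by
    intro i
    by_contra hneg
    push_neg at hneg
    set c : ℝ := -w0 i with hc
    have hcpos : 0 < c := by simp [hc]; linarith
    set t : ℝ := (f (emb b0) - u) / c + 1 with ht
    have h1 : 0 < (f (emb b0) - u) / c := div_pos (by linarith) hcpos
    have htpos : 0 < t := by rw [ht]; linarith
    have hsingle : t • (Pi.single i 1 : Fin m → ℝ) ∈ orth m := by
      intro j
      by_cases h : j = i
      · subst h
        have hval : (t • (Pi.single j 1 : Fin m → ℝ)) j = t := by simp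
        rw [hval]
        exact htpos.le
      · simp [Pi.single_apply, h]
    have hmem : emb b0 + t • (Pi.single i 1 : Fin m → ℝ) ∈ C :=
      Set.add_mem_add hb0hull hsingle
    have hval := hfC _ hmem
    rw [map_add, map_smul, smul_eq_mul] at hval
    have hfi : f (Pi.single i 1) = w0 i := rfl
    rw [hfi] at hval
    have hexp : t * w0 i = -(f (emb b0) - u) - c := by
      rw [ht, hc]
      have hw0ne : w0 i ≠ 0 := hneg.ne
      field_simp
      ring
    rw [hexp] at hval
    linarith
  set Sv : ℝ := ∑ i, emb v i with hSv
  have hSv0 : 0 ≤ Sv := Finset.sum_nonneg fun i _ => by simp [emb]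
  set ε : ℝ := (u - f (emb v)) / (Sv + 1) with hε
  have hεpos : 0 < ε := by
    apply div_pos
    · linarith
    · linarith
  refine ⟨fun i => w0 i + ε, fun i => by have := hw0nn i; show 0 < w0 i + ε; linarith, ?_⟩
  have key : ∀ z : Fin m →₀ ℕ,
      dotL (fun i => w0 i + ε) (emb z) = f (emb z) + ε * ∑ i, emb z i := by
    intro z
    rw [dotL_apply, clm_repr f (emb z), Finset.mul_sum, ← Finset.sum_add_distrib]
    refine Finset.sum_congr rfl fun i _ => ?_
    have : f (Pi.single i 1) = w0 i := rfl
    rw [this]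
    ring
  intro y hy hne
  have hyC : emb y ∈ C := by
    rw [← hnewt]
    apply subset_convexHull ℝ _
    exact ⟨y, Set.mem_add.mpr ⟨y, ⟨hy, hne⟩, 0, trivial, add_zero y⟩, rfl⟩
  have hfy : u < f (emb y) := hfC _ hyC
  have hSy : 0 ≤ ∑ i, emb y i := Finset.sum_nonneg fun i _ => by simp [emb]
  rw [key y, key v]
  have hεv : ε * Sv < u - f (emb v) := by
    have : ε * (Sv + 1) = u - f (emb v) := by
      rw [hε]; field_simp
    nlinarith
  have : 0 ≤ ε * ∑ i, emb y i := by positivity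
  simp only [← hSv]
  nlinarith

lemma mem_vert_iff {A : Set (Fin m →₀ ℕ)} {v : Fin m →₀ ℕ} :
    v ∈ vert A ↔ v ∈ A ∧ ∃ w : Fin m → ℝ, (∀ i, 0 < w i) ∧
      ∀ y ∈ A, y ≠ v → dotL w (emb v) < dotL w (emb y) :=
  ⟨fun h => ⟨h.1, strictmin_of_vert h⟩, fun ⟨hv, _, hw, hmin⟩ => vert_of_strictmin hw hv hmin⟩

lemma vert_add_decomp {A B : Set (Fin m →₀ ℕ)} {v : Fin m →₀ ℕ} (hv : v ∈ vert (A + B)) :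
    ∃ a b, a ∈ vert A ∧ b ∈ vert B ∧ a + b = v ∧
      ∀ a' ∈ A, ∀ b' ∈ B, a' + b' = v → a' = a ∧ b' = b := by
  obtain ⟨hvm, w, hw, hmin⟩ := mem_vert_iff.mp hv
  rcases Set.mem_add.mp hvm with ⟨a, ha, b, hb, hab⟩
  have hamin : ∀ a' ∈ A, a' ≠ a → dotL w (emb a) < dotL w (emb a') := by
    intro a' ha' hne
    have h1 : a' + b ≠ v := by
      intro h
      apply hne
      have h2 : a' + b = a + b := by rw [h, ← hab]
      exact add_right_cancel h2
    have h3 := hmin (a' + b) (Set.add_mem_add ha' hb) h1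
    rw [← hab, emb_add, emb_add, map_add, map_add] at h3
    linarith
  have hbmin : ∀ b' ∈ B, b' ≠ b → dotL w (emb b) < dotL w (emb b') := by
    intro b' hb' hne
    have h1 : a + b' ≠ v := by
      intro h
      apply hne
      have h2 : a + b' = a + b := by rw [h, ← hab]
      exact add_left_cancel h2
    have h3 := hmin (a + b') (Set.add_mem_add ha hb') h1
    rw [← hab, emb_add, emb_add, map_add, map_add] at h3
    linarith
  refine ⟨a, b, vert_of_strictmin hw ha hamin, vert_of_strictmin hw hb hbmin, hab, ?_⟩
  intro a' ha' b' hb' h'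
  by_cases h1 : a' = a
  · subst h1
    refine ⟨rfl, ?_⟩
    have h2 : a' + b' = a' + b := by rw [h', ← hab]
    exact add_left_cancel h2
  · exfalso
    have hx := hamin a' ha' h1
    by_cases h2 : b' = b
    · subst h2
      exact h1 (add_right_cancel (h'.trans hab.symm))
    · have hy := hbmin b' hb' h2
      have h3 : emb a' + emb b' = emb a + emb b := by
        rw [← emb_add, ← emb_add, h', hab]
      have h4 := congrArg (dotL w) h3
      rw [map_add, map_add] at h4
      linarith

lemma sublevel_finite {w : Fin m → ℝ} (hw : ∀ i, 0 < w i) (S : Set (Fin m →₀ ℕ)) (c : ℝ) :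
    {b ∈ S | dotL w (emb b) ≤ c}.Finite := by
  classical
  set bnd : Fin m →₀ ℕ := Finsupp.equivFunOnFinite.symm (fun i => ⌈c / w i⌉₊) with hbnd
  apply Set.Finite.subset (Set.finite_Iic bnd)
  rintro b ⟨-, hb⟩
  rw [Set.mem_Iic]
  rw [Finsupp.le_def]
  intro i
  have h1 : w i * (b i : ℝ) ≤ dotL w (emb b) := by
    rw [dotL_apply]
    refine Finset.single_le_sum (f := fun j => w j * emb b j) ?_ (Finset.mem_univ i)
    intro j _
    exact mul_nonneg (hw j).le (by simp [emb])
  have h2 : (b i : ℝ) ≤ c / w i := by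
    rw [le_div_iff₀ (hw i)]
    calc (b i : ℝ) * w i = w i * (b i : ℝ) := by ring
    _ ≤ dotL w (emb b) := h1
    _ ≤ c := hb
  have h3 : (b i : ℝ) ≤ (⌈c / w i⌉₊ : ℝ) := h2.trans (Nat.le_ceil _)
  have h4 : b i ≤ ⌈c / w i⌉₊ := by exact_mod_cast h3
  simpa [hbnd] using h4

lemma mem_hull_level {Z : Set (Fin m → ℝ)} {w : Fin m → ℝ} {c : ℝ}
    (hZ : ∀ p ∈ Z, c ≤ dotL w p) {x : Fin m → ℝ} (hx : x ∈ convexHull ℝ Z)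
    (hfx : dotL w x = c) : x ∈ convexHull ℝ (Z ∩ {p | dotL w p = c}) := by
  classical
  rw [convexHull_eq] at hx
  obtain ⟨ι, t, wt, z, hw0, hw1, hz, hxe⟩ := hx
  have hcm : ∑ i ∈ t, wt i • z i = x := by
    rw [← Finset.centerMass_eq_of_sum_1 _ _ hw1, hxe]
  have hfx' : ∑ i ∈ t, wt i * dotL w (z i) = c := by
    rw [← hfx, ← hcm, map_sum]
    refine Finset.sum_congr rfl fun i _ => ?_
    rw [map_smul, smul_eq_mul]
  have hkey : ∀ i ∈ t, wt i * dotL w (z i) = wt i * c := by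
    by_contra hcon
    push_neg at hcon
    obtain ⟨i0, hi0, hne⟩ := hcon
    have hlt : ∀ i ∈ t, wt i * c ≤ wt i * dotL w (z i) := fun i hi =>
      mul_le_mul_of_nonneg_left (hZ _ (hz i hi)) (hw0 i hi)
    have hstrict : wt i0 * c < wt i0 * dotL w (z i0) :=
      lt_of_le_of_ne (hlt _ hi0) (Ne.symm hne)
    have hsum : ∑ i ∈ t, wt i * c < ∑ i ∈ t, wt i * dotL w (z i) :=
      Finset.sum_lt_sum hlt ⟨i0, hi0, hstrict⟩
    rw [hfx', ← Finset.sum_mul, hw1, one_mul] at hsum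
    exact lt_irrefl _ hsum
  set t' := t.filter (fun i => wt i ≠ 0) with ht'
  have hsub : ∀ i ∈ t', z i ∈ Z ∩ {p | dotL w p = c} := by
    intro i hi
    rw [ht', Finset.mem_filter] at hi
    refine ⟨hz i hi.1, ?_⟩
    exact mul_left_cancel₀ hi.2 (hkey i hi.1)
  have hw1' : ∑ i ∈ t', wt i = 1 := by
    rw [ht', Finset.sum_filter_ne_zero, hw1]
  have hcm' : ∑ i ∈ t', wt i • z i = x := by
    rw [← hcm, ht']
    apply Finset.sum_filter_of_ne
    intro i _ hne hwz
    exact hne (by rw [hwz, zero_smul])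
  have := Finset.centerMass_mem_convexHull t'
    (fun i hi => hw0 i (Finset.filter_subset _ _ hi)) (by rw [hw1']; norm_num) hsub
  rw [Finset.centerMass_eq_of_sum_1 _ _ hw1', hcm'] at this
  exact this

lemma km (S : Finset (Fin m →₀ ℕ)) (c : Fin m →₀ ℕ)
    (h : ∀ b ∈ S, b ≠ c → emb b ∈ convexHull ℝ (emb '' (↑S \ {b}))) :
    ∀ x ∈ S, x = c := by
  by_contra hcon
  push_neg at hcon
  obtain ⟨x0, hx0S, hx0c⟩ := hcon
  set K := convexHull ℝ (emb '' (↑S : Set (Fin m →₀ ℕ))) with hK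
  have hcomp : IsCompact K := (S.finite_toSet.image emb).isCompact_convexHull ℝ
  have hconv : Convex ℝ K := convex_convexHull ℝ _
  have hext : K.extremePoints ℝ ⊆ {emb c} := by
    intro e he
    have heS : e ∈ emb '' (↑S : Set (Fin m →₀ ℕ)) := extremePoints_convexHull_subset he
    obtain ⟨b, hbS, rfl⟩ := heS
    by_contra hbc
    have hbc' : b ≠ c := by
      intro h'
      exact hbc (by rw [h']; exact rfl)
    have hhull := h b hbS hbc'
    have hsub : emb '' ((↑S : Set (Fin m →₀ ℕ)) \ {b}) ⊆ K \ {emb b} := by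
      rintro _ ⟨y, ⟨hyS, hyb⟩, rfl⟩
      refine ⟨subset_convexHull ℝ _ ⟨y, hyS, rfl⟩, ?_⟩
      intro he'
      exact hyb (emb_inj (Set.mem_singleton_iff.mp he'))
    have h2 := (hconv.mem_extremePoints_iff_mem_diff_convexHull_diff.mp he).2
    exact h2 (convexHull_mono hsub hhull)
  have hKsub : K ⊆ {emb c} := by
    have h3 := closure_convexHull_extremePoints hcomp hconv
    rw [← h3]
    calc closure (convexHull ℝ (K.extremePoints ℝ))
        ⊆ closure (convexHull ℝ {emb c}) := closure_mono (convexHull_mono hext)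
    _ = {emb c} := by rw [convexHull_singleton, closure_singleton]
  have hx0K : emb x0 ∈ K := subset_convexHull ℝ _ ⟨x0, hx0S, rfl⟩
  exact hx0c (emb_inj (Set.mem_singleton_iff.mp (hKsub hx0K)))

lemma vert_dom {w : Fin m → ℝ} (hw : ∀ i, 0 < w i) {B : Set (Fin m →₀ ℕ)}
    {b : Fin m →₀ ℕ} (hb : b ∈ B) :
    ∃ c ∈ vert B, dotL w (emb c) ≤ dotL w (emb b) ∧
      (c = b ∨ dotL w (emb c) < dotL w (emb b) ∨
        ∃ c' ∈ vert B, c' ≠ c ∧ dotL w (emb c') ≤ dotL w (emb b)) := by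
  classical
  by_cases hbv : b ∈ vert B
  · exact ⟨b, hbv, le_refl _, Or.inl rfl⟩
  have hLfin : ({x ∈ B | dotL w (emb x) ≤ dotL w (emb b)}).Finite :=
    sublevel_finite hw B _
  have hLne : ({x ∈ B | dotL w (emb x) ≤ dotL w (emb b)}).Nonempty := ⟨b, hb, le_refl _⟩
  obtain ⟨x0, hx0L, hx0min⟩ := Set.exists_min_image _ (fun x => dotL w (emb x)) hLfin hLne
  set μ := dotL w (emb x0) with hμ
  have hμle : μ ≤ dotL w (emb b) := hx0L.2
  have hglobal : ∀ x ∈ B, μ ≤ dotL w (emb x) := by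
    intro x hx
    by_cases hxL : dotL w (emb x) ≤ dotL w (emb b)
    · exact hx0min x ⟨hx, hxL⟩
    · push_neg at hxL; linarith
  set S : Set (Fin m →₀ ℕ) := {x ∈ B | dotL w (emb x) = μ} with hS
  have hSfin : S.Finite := Set.Finite.subset hLfin (fun x hx => ⟨hx.1, hx.2.le.trans hμle⟩)
  have hdot0 : dotL w (emb (0 : Fin m →₀ ℕ)) = 0 := by rw [emb_zero, map_zero]
  have halpha : ∀ x ∈ S, x ∉ vert B → emb x ∈ convexHull ℝ (emb '' (S \ {x})) := by
    intro x hxS hxv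
    have hxnewton : emb x ∈ newton (B \ {x}) := by
      by_contra hcon
      exact hxv ⟨hxS.1, hcon⟩
    have hZ : ∀ p ∈ emb '' ((B \ {x}) + Set.univ), μ ≤ dotL w p := by
      rintro _ ⟨q, hq, rfl⟩
      rcases Set.mem_add.mp hq with ⟨y, hy, k, -, rfl⟩
      rw [emb_add, map_add]
      have h5 := hglobal y hy.1
      have h6 := dotL_emb_nonneg (fun i => (hw i).le) k
      linarith
    have hmem := mem_hull_level hZ hxnewton hxS.2
    have hsub : (emb '' ((B \ {x}) + Set.univ)) ∩ {p | dotL w p = μ}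
        ⊆ emb '' (S \ {x}) := by
      rintro _ ⟨⟨q, hq, rfl⟩, hpd⟩
      rcases Set.mem_add.mp hq with ⟨y, hy, k, -, rfl⟩
      have hdy := hglobal y hy.1
      have hdk := dotL_emb_nonneg (fun i => (hw i).le) k
      have heq : dotL w (emb (y + k)) = μ := hpd
      rw [emb_add, map_add] at heq
      have hk0 : k = 0 := by
        by_contra hk
        have := dotL_emb_pos hw hk
        linarith
      subst hk0
      rw [hdot0] at heq
      exact ⟨y, ⟨⟨hy.1, by linarith⟩, hy.2⟩, by rw [add_zero]⟩
    exact convexHull_mono hsub hmem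
  have hexv : ∃ c ∈ S, c ∈ vert B := by
    by_contra hcon
    push_neg at hcon
    have hx0S : x0 ∈ S := ⟨hx0L.1, rfl⟩
    have hyp : ∀ y ∈ hSfin.toFinset, y ≠ x0 →
        emb y ∈ convexHull ℝ (emb '' ((↑hSfin.toFinset : Set (Fin m →₀ ℕ)) \ {y})) := by
      intro y hy _
      rw [Set.Finite.mem_toFinset] at hy
      rw [Set.Finite.coe_toFinset]
      exact halpha y hy (hcon y hy)
    have hkm := km hSfin.toFinset x0 hyp
    have hx0hull := halpha x0 hx0S (hcon x0 hx0S)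
    have hempty : S \ {x0} = (∅ : Set (Fin m →₀ ℕ)) := by
      ext y
      simp only [Set.mem_diff, Set.mem_singleton_iff, Set.mem_empty_iff_false, iff_false,
        not_and, not_not]
      intro hyS
      exact hkm y (hSfin.mem_toFinset.mpr hyS)
    rw [hempty] at hx0hull
    simpa using hx0hull
  obtain ⟨c, hcS, hcv⟩ := hexv
  by_cases hcase : μ < dotL w (emb b)
  · exact ⟨c, hcv, by rw [hcS.2]; exact hμle, Or.inr (Or.inl (by rw [hcS.2]; exact hcase))⟩
  · push_neg at hcase
    have hbμ : dotL w (emb b) = μ := le_antisymm hcase hμle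
    have hbS : b ∈ S := ⟨hb, hbμ⟩
    have hbc : b ≠ c := fun h => hbv (h ▸ hcv)
    have hc2 : ∃ c' ∈ S, c' ∈ vert B ∧ c' ≠ c := by
      by_contra hcon
      push_neg at hcon
      have hyp : ∀ y ∈ hSfin.toFinset, y ≠ c →
          emb y ∈ convexHull ℝ (emb '' ((↑hSfin.toFinset : Set (Fin m →₀ ℕ)) \ {y})) := by
        intro y hy hyc
        rw [Set.Finite.mem_toFinset] at hy
        rw [Set.Finite.coe_toFinset]
        have hynv : y ∉ vert B := fun hv => hyc (hcon y hy hv)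
        exact halpha y hy hynv
      have hkm := km hSfin.toFinset c hyp
      exact hbc (hkm b (hSfin.mem_toFinset.mpr hbS))
    obtain ⟨c', hc'S, hc'v, hc'c⟩ := hc2
    refine ⟨c, hcv, by rw [hcS.2]; exact hμle,
      Or.inr (Or.inr ⟨c', hc'v, hc'c, by rw [hc'S.2]; exact hμle⟩)⟩

lemma vert_sandwich {C D : Set (Fin m →₀ ℕ)} (h1 : vert C ⊆ D) (h2 : D ⊆ C) :
    vert D = vert C := by
  apply Set.Subset.antisymm
  · intro v hv
    obtain ⟨hvD, w, hw, hmin⟩ := mem_vert_iff.mp hv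
    refine mem_vert_iff.mpr ⟨h2 hvD, w, hw, ?_⟩
    intro y hy hne
    obtain ⟨c, hcv, hcle, hcase⟩ := vert_dom hw hy
    rcases hcase with rfl | hlt | ⟨c', hc'v, hc'c, hc'le⟩
    · exact hmin _ (h1 hcv) hne
    · by_cases hcv2 : c = v
      · rw [← hcv2]; exact hlt
      · exact lt_trans (hmin c (h1 hcv) hcv2) hlt
    · by_cases hcv2 : c = v
      · have hc'vne : c' ≠ v := by rw [← hcv2]; exact hc'c
        exact lt_of_lt_of_le (hmin c' (h1 hc'v) hc'vne) hc'le
      · exact lt_of_lt_of_le (hmin c (h1 hcv) hcv2) hcle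
  · intro v hv
    obtain ⟨hvC, w, hw, hmin⟩ := mem_vert_iff.mp hv
    exact mem_vert_iff.mpr ⟨h1 hv, w, hw, fun y hy hne => hmin y (h2 hy) hne⟩

lemma vert_add_subset {A B : Set (Fin m →₀ ℕ)} : vert (A + B) ⊆ vert A + vert B := by
  intro v hv
  obtain ⟨a, b, ha, hb, hab, -⟩ := vert_add_decomp hv
  exact Set.mem_add.mpr ⟨a, ha, b, hb, hab⟩

lemma vert_add_left (A B : Set (Fin m →₀ ℕ)) : vert (vert A + B) = vert (A + B) :=
  vert_sandwich
    (fun v hv => (Set.add_subset_add (Set.Subset.refl _) vert_subset) (vert_add_subset hv))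
    (Set.add_subset_add vert_subset (Set.Subset.refl _))

lemma vert_add_right (A B : Set (Fin m →₀ ℕ)) : vert (A + vert B) = vert (A + B) := by
  rw [add_comm A (vert B), add_comm A B]
  exact vert_add_left B A

lemma nMink_zero (X : Set (Fin m →₀ ℕ)) : nMink 0 X = {0} := rfl
lemma nMink_succ (k : ℕ) (X : Set (Fin m →₀ ℕ)) : nMink (k+1) X = X + nMink k X := rfl

lemma vert_zero_singleton : vert ({0} : Set (Fin m →₀ ℕ)) = {0} := by
  apply Set.Subset.antisymm vert_subset
  intro x hx
  rw [Set.mem_singleton_iff] at hx; subst hx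
  refine ⟨rfl, ?_⟩
  have h : ({0} : Set (Fin m →₀ ℕ)) \ {0} = ∅ := by simp
  rw [h]
  show emb 0 ∉ newton ∅
  unfold newton
  rw [Set.empty_add, Set.image_empty, convexHull_empty]
  exact Set.notMem_empty _

lemma supp_one : supp (1 : MvPowerSeries (Fin m) K) = {0} := by
  classical
  ext L
  simp only [supp, Set.mem_setOf_eq, Set.mem_singleton_iff]
  rw [MvPowerSeries.coeff_one]
  by_cases h : L = 0 <;> simp [h]

lemma vert_supp_mul (f g : MvPowerSeries (Fin m) K) :
    vert (supp (f * g)) = vert (supp f + supp g) := by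
  classical
  apply vert_sandwich
  · intro v hv
    obtain ⟨a, b, ha, hb, hab, huniq⟩ := vert_add_decomp hv
    show MvPowerSeries.coeff v (f * g) ≠ 0
    rw [MvPowerSeries.coeff_mul]
    rw [Finset.sum_eq_single_of_mem (a, b) (Finset.HasAntidiagonal.mem_antidiagonal.mpr hab) ?_]
    · exact mul_ne_zero (vert_subset ha) (vert_subset hb)
    · intro p hp hpne
      by_contra hne
      obtain ⟨h1, h2⟩ := mul_ne_zero_iff.mp hne
      obtain ⟨e1, e2⟩ := huniq p.1 h1 p.2 h2 (Finset.HasAntidiagonal.mem_antidiagonal.mp hp)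
      exact hpne (Prod.ext e1 e2)
  · intro v hv
    by_contra hcon
    apply hv
    show MvPowerSeries.coeff v (f * g) = 0
    rw [MvPowerSeries.coeff_mul]
    apply Finset.sum_eq_zero
    intro p hp
    by_contra hne
    obtain ⟨h1, h2⟩ := mul_ne_zero_iff.mp hne
    exact hcon (Set.mem_add.mpr ⟨p.1, h1, p.2, h2, Finset.HasAntidiagonal.mem_antidiagonal.mp hp⟩)

lemma supp_theta [CharZero K] (J : Fin m →₀ ℕ) (f : MvPowerSeries (Fin m) K) :
    supp (theta J f) = thetaTrop J (supp f) := by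
  ext L
  have hc : ((∏ i : Fin m, ((L i + J i).factorial / (L i).factorial) : ℕ) : K) ≠ 0 := by
    rw [Nat.cast_ne_zero]
    have hpos : 0 < ∏ i : Fin m, ((L i + J i).factorial / (L i).factorial) :=
      Finset.prod_pos fun i _ =>
        Nat.div_pos (Nat.factorial_le (Nat.le_add_right _ _)) (Nat.factorial_pos _)
    exact hpos.ne'
  have hco : MvPowerSeries.coeff L (theta J f)
      = ((∏ i : Fin m, ((L i + J i).factorial / (L i).factorial) : ℕ) : K)
        * MvPowerSeries.coeff (L + J) f := rfl
  simp only [supp, thetaTrop, Set.mem_setOf_eq, hco]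
  constructor
  · intro h; exact (mul_ne_zero_iff.mp h).2
  · intro h; exact mul_ne_zero hc h

lemma vert_supp_pow (f : MvPowerSeries (Fin m) K) (k : ℕ) :
    vert (supp (f ^ k)) = vert (nMink k (supp f)) := by
  induction k with
  | zero => rw [pow_zero, supp_one, nMink_zero]
  | succ k ih =>
    rw [pow_succ, vert_supp_mul, ← vert_add_left, ih, vert_add_left, nMink_succ, add_comm]

lemma odotPow_eq (k : ℕ) (S : Set (Fin m →₀ ℕ)) : odotPow k S = vert (nMink k S) := by
  induction k with
  | zero => exact vert_zero_singleton.symm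
  | succ k ih =>
    show odot S (odotPow k S) = _
    rw [ih]
    show vert (S + vert (nMink k S)) = _
    rw [vert_add_right, nMink_succ]

lemma vert_nMink_vert (k : ℕ) (T : Set (Fin m →₀ ℕ)) :
    vert (nMink k (vert T)) = vert (nMink k T) := by
  induction k with
  | zero => rw [nMink_zero, nMink_zero]
  | succ k ih =>
    rw [nMink_succ, nMink_succ]
    rw [vert_add_left, ← vert_add_right, ih, vert_add_right]

lemma vert_supp_prod {ι : Type} (s : Finset ι) (F : ι → MvPowerSeries (Fin m) K)
    (N : ι → Set (Fin m →₀ ℕ)) :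
    (∀ p ∈ s, vert (supp (F p)) = vert (N p)) →
    vert (supp (∏ p ∈ s, F p)) = vert (∑ p ∈ s, N p) := by
  classical
  induction s using Finset.induction_on with
  | empty =>
    intro _
    rw [Finset.prod_empty, Finset.sum_empty, supp_one]
    congr 1
  | @insert a s hns ih =>
    intro h
    rw [Finset.prod_insert hns, Finset.sum_insert hns, vert_supp_mul, ← vert_add_right,
      ih (fun p hp => h p (Finset.mem_insert_of_mem hp)), vert_add_right, ← vert_add_left,
      h a (Finset.mem_insert_self a s), vert_add_left]

lemma foldr_odot_eq {ι : Type} (l : List ι) (X N : ι → Set (Fin m →₀ ℕ))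
    (h : ∀ p ∈ l, ∃ N', X p = vert N' ∧ vert N' = vert (N p)) :
    (l.map X).foldr odot {0} = vert ((l.map N).sum) := by
  induction l with
  | nil =>
    simp only [List.map_nil, List.foldr_nil, List.sum_nil]
    have : ((0 : Set (Fin m →₀ ℕ))) = {0} := rfl
    rw [this, vert_zero_singleton]
  | cons a l ih =>
    obtain ⟨N', hXa, hvN⟩ := h a List.mem_cons_self
    rw [List.map_cons, List.foldr_cons, ih (fun p hp => h p (List.mem_cons_of_mem a hp)),
      List.map_cons, List.sum_cons]
    show vert (X a + vert ((l.map N).sum)) = _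
    rw [vert_add_right, hXa, vert_add_left, ← vert_add_left, hvN, vert_add_left]

end TropAux

open TropAux in
/-- The tropicalization of the value of a differential monomial
`E_M(φ) = ∏_{i,J} (Θ(J)φ_i)^{M_{i,J}}` equals the `⊙`-product
`⊙_{i,J} Val_J(Supp φ_i)^{⊙M_{i,J}}`, which in turn equals the vertex set of the
iterated Minkowski sum `Σ_{i,J} M_{i,J}·Θ_trop(J)(Supp φ_i)`. -/
theorem trop_monomial (K : Type) [Field K] [CharZero K] (m n : ℕ)
    (hm : 1 ≤ m) (hn : 1 ≤ n)
    (φ : Fin n → MvPowerSeries (Fin m) K)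
    (M : (Fin n × (Fin m →₀ ℕ)) →₀ ℕ) :
    trop (M.prod fun p k => theta p.2 (φ p.1) ^ k) =
      (M.support.toList.map fun p =>
        odotPow (M p) (valJ p.2 (supp (φ p.1)))).foldr odot {0} ∧
    (M.support.toList.map fun p =>
        odotPow (M p) (valJ p.2 (supp (φ p.1)))).foldr odot {0} =
      vert (M.sum fun p k => nMink k (thetaTrop p.2 (supp (φ p.1)))) := by
  classical
  have hB : (M.support.toList.map fun p =>
        odotPow (M p) (valJ p.2 (supp (φ p.1)))).foldr odot {0} =
      vert (M.sum fun p k => nMink k (thetaTrop p.2 (supp (φ p.1)))) := by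
    rw [foldr_odot_eq (M.support.toList)
      (fun p => odotPow (M p) (valJ p.2 (supp (φ p.1))))
      (fun p => nMink (M p) (thetaTrop p.2 (supp (φ p.1))))
      (fun p _ => ⟨nMink (M p) (vert (thetaTrop p.2 (supp (φ p.1)))),
        odotPow_eq _ _, vert_nMink_vert _ _⟩)]
    have hsum : (List.map (fun p => nMink (M p) (thetaTrop p.2 (supp (φ p.1))))
        M.support.toList).sum
        = ∑ p ∈ M.support, nMink (M p) (thetaTrop p.2 (supp (φ p.1))) :=
      Finset.sum_map_toList _ _
    rw [hsum]
    rfl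
  have hA : trop (M.prod fun p k => theta p.2 (φ p.1) ^ k) =
      vert (M.sum fun p k => nMink k (thetaTrop p.2 (supp (φ p.1)))) := by
    show vert (supp (∏ p ∈ M.support, theta p.2 (φ p.1) ^ (M p)))
      = vert (∑ p ∈ M.support, nMink (M p) (thetaTrop p.2 (supp (φ p.1))))
    apply vert_supp_prod
    intro p _
    rw [vert_supp_pow, supp_theta]
  exact ⟨hA.trans hB.symm, hB⟩

end
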